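/- arXiv:1510.04569 — 3 statements merged into one kernel-verified Lean document; each statement's English description precedes it below -/
import Mathlib

section
/- Let (𝔛,d) be a metric space equipped with a Borel measure m, let z₀ ∈ 𝔛, and set V(t) = m(B(z₀,t)), assumed finite and strictly positive for every t > 0. Assume there is C_V > 1 with V(2t) ≤ C_V V(t) for all t > 0, and that there exist a natural number n₀ ≥ 2, a constant c₂ > 1 and r₀ > 0 such that V(n₀ t) ≥ c₂ V(t) for all t ≥ r₀. Let Φ : (0,∞) → (0,∞) be nondecreasing with Φ(2t) ≤ C_Φ Φ(t) for all t > 0 for some C_Φ > 1. Let j : 𝔛 → [0,∞] be measurable and suppose there is κ > 0 such that j(y) ≥ κ/(V(s)Φ(s)) for every s ≥ r₀ and every y ∈ 𝔛 with s ≤ d(z₀,y) ≤ 2s. Then there exists a constant c > 0, depending only on C_V, C_Φ, c₂, n₀ and κ, such that for every s ≥ r₀ one has ∫_{{y : d(z₀,y) ≥ s}} j dm ≥ c/Φ(s). -/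
open MeasureTheory Metric Set
open scoped ENNReal NNReal


private lemma exists_dyadic_index {k : ℕ} {s d : ℝ} (h1 : s ≤ d)
    (h2 : d < 2 ^ k * s) : ∃ i, i < k ∧ 2 ^ i * s ≤ d ∧ d ≤ 2 ^ (i + 1) * s := by
  induction k with
  | zero => simp at h2; linarith
  | succ k ih =>
    by_cases h : d < 2 ^ k * s
    · obtain ⟨i, hi, h⟩ := ih h
      exact ⟨i, hi.trans (Nat.lt_succ_self k), h⟩
    · exact ⟨k, Nat.lt_succ_self k, le_of_not_gt h, h2.le⟩


/-- Annulus-decomposition tail lower bound for the jump density at large scales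
(Section 3 of the paper). -/
theorem tail_integral_lower_bound_at_infinity
    {X : Type*} [MetricSpace X] [MeasurableSpace X] [BorelSpace X]
    (m : Measure X) (z₀ : X)
    (hVpos : ∀ t : ℝ, 0 < t → 0 < m (ball z₀ t))
    (hVfin : ∀ t : ℝ, 0 < t → m (ball z₀ t) < ⊤)
    (C_V : ℝ≥0) (hCV : 1 < C_V)
    (hVdoub : ∀ t : ℝ, 0 < t → m (ball z₀ (2 * t)) ≤ (C_V : ℝ≥0∞) * m (ball z₀ t))
    (n₀ : ℕ) (hn₀ : 2 ≤ n₀) (c₂ : ℝ≥0) (hc₂ : 1 < c₂) (r₀ : ℝ) (hr₀ : 0 < r₀)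
    (hVrev : ∀ t : ℝ, r₀ ≤ t → (c₂ : ℝ≥0∞) * m (ball z₀ t) ≤ m (ball z₀ (n₀ * t)))
    (Φ : ℝ → ℝ) (hΦpos : ∀ t : ℝ, 0 < t → 0 < Φ t)
    (hΦmono : ∀ s t : ℝ, 0 < s → s ≤ t → Φ s ≤ Φ t)
    (C_Φ : ℝ) (hCΦ : 1 < C_Φ)
    (hΦdoub : ∀ t : ℝ, 0 < t → Φ (2 * t) ≤ C_Φ * Φ t)
    (j : X → ℝ≥0∞) (hj : Measurable j) (κ : ℝ) (hκ : 0 < κ)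
    (hjlow : ∀ s : ℝ, r₀ ≤ s → ∀ y : X, s ≤ dist z₀ y → dist z₀ y ≤ 2 * s →
      ENNReal.ofReal κ / (m (ball z₀ s) * ENNReal.ofReal (Φ s)) ≤ j y) :
    ∃ c : ℝ, 0 < c ∧ ∀ s : ℝ, r₀ ≤ s →
      ENNReal.ofReal (c / Φ s) ≤ ∫⁻ y in {y : X | s ≤ dist z₀ y}, j y ∂m := by
  set k := n₀ with hkdef
  have hCV1 : (1:ℝ) < (C_V : ℝ) := by exact_mod_cast hCV
  have hc₂1 : (1:ℝ) < (c₂ : ℝ) := by exact_mod_cast hc₂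
  have hβ : (0:ℝ) < (c₂ : ℝ) - 1 := by linarith
  have hCVk : (0:ℝ) < (C_V : ℝ) ^ k := by positivity
  have hCΦk : (0:ℝ) < C_Φ ^ k := by positivity
  refine ⟨κ * ((c₂ : ℝ) - 1) / ((C_V : ℝ) ^ k * C_Φ ^ k), by positivity, ?_⟩
  intro s hs
  have hs0 : 0 < s := lt_of_lt_of_le hr₀ hs
  have hΦs : 0 < Φ s := hΦpos s hs0
  have hB0 : m (ball z₀ s) ≠ 0 := (hVpos s hs0).ne'
  have hBfin : m (ball z₀ s) ≠ ⊤ := (hVfin s hs0).ne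
  -- iterated doubling
  have hViter : ∀ i : ℕ, m (ball z₀ (2 ^ i * s)) ≤ (C_V : ℝ≥0∞) ^ i * m (ball z₀ s) := by
    intro i
    induction i with
    | zero => simp
    | succ i ih =>
      have h2 : (2:ℝ) ^ (i+1) * s = 2 * (2 ^ i * s) := by ring
      calc m (ball z₀ (2 ^ (i+1) * s)) ≤ (C_V : ℝ≥0∞) * m (ball z₀ (2 ^ i * s)) := by
            rw [h2]; exact hVdoub _ (by positivity)
        _ ≤ (C_V : ℝ≥0∞) * ((C_V : ℝ≥0∞) ^ i * m (ball z₀ s)) := by gcongr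
        _ = (C_V : ℝ≥0∞) ^ (i+1) * m (ball z₀ s) := by ring
  have hΦiter : ∀ i : ℕ, Φ (2 ^ i * s) ≤ C_Φ ^ i * Φ s := by
    intro i
    induction i with
    | zero => simp
    | succ i ih =>
      have h2 : (2:ℝ) ^ (i+1) * s = 2 * (2 ^ i * s) := by ring
      calc Φ (2 ^ (i+1) * s) ≤ C_Φ * Φ (2 ^ i * s) := by
            rw [h2]; exact hΦdoub _ (by positivity)
        _ ≤ C_Φ * (C_Φ ^ i * Φ s) := by nlinarith
        _ = C_Φ ^ (i+1) * Φ s := by ring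
  set S : Set X := ball z₀ (2 ^ k * s) \ ball z₀ s with hSdef
  have hSmeas : MeasurableSet S := measurableSet_ball.diff measurableSet_ball
  set L : ℝ≥0∞ := ENNReal.ofReal κ /
      ((C_V : ℝ≥0∞) ^ k * m (ball z₀ s) * ENNReal.ofReal (C_Φ ^ k * Φ s)) with hLdef
  -- pointwise lower bound on S
  have hpt : ∀ y ∈ S, L ≤ j y := by
    intro y hy
    have hd1 : s ≤ dist z₀ y := by
      have := hy.2
      simp only [mem_ball, not_lt] at this
      rwa [dist_comm] at this
    have hd2 : dist z₀ y < 2 ^ k * s := by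
      have := hy.1
      simp only [mem_ball] at this
      rwa [dist_comm] at this
    obtain ⟨i, hik, hi1, hi2⟩ := exists_dyadic_index hd1 hd2
    have hsi : (0:ℝ) < 2 ^ i * s := by positivity
    have hr₀i : r₀ ≤ 2 ^ i * s := le_trans hs (le_mul_of_one_le_left hs0.le (one_le_pow₀ one_le_two))
    have hbound := hjlow (2 ^ i * s) hr₀i y hi1 (by rw [pow_succ] at hi2; nlinarith)
    refine le_trans ?_ hbound
    apply ENNReal.div_le_div_left
    have hm1 : m (ball z₀ (2 ^ i * s)) ≤ (C_V : ℝ≥0∞) ^ k * m (ball z₀ s) := by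
      refine (hViter i).trans ?_
      exact mul_le_mul_left (pow_le_pow_right₀ (by exact_mod_cast hCV.le) hik.le) _
    have hm2 : ENNReal.ofReal (Φ (2 ^ i * s)) ≤ ENNReal.ofReal (C_Φ ^ k * Φ s) := by
      apply ENNReal.ofReal_le_ofReal
      refine (hΦiter i).trans ?_
      have : C_Φ ^ i ≤ C_Φ ^ k := pow_le_pow_right₀ (le_of_lt hCΦ) hik.le
      nlinarith
    exact mul_le_mul' hm1 hm2
  -- integral lower bound
  have hstep1 : L * m S ≤ ∫⁻ y in {y : X | s ≤ dist z₀ y}, j y ∂m := by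
    have hsub : S ⊆ {y : X | s ≤ dist z₀ y} := by
      intro y hy
      have := hy.2
      simp only [mem_ball, not_lt] at this
      simpa [dist_comm] using this
    calc L * m S = ∫⁻ _ in S, L ∂m := (setLIntegral_const S L).symm
      _ ≤ ∫⁻ y in S, j y ∂m := setLIntegral_mono' hSmeas hpt
      _ ≤ _ := lintegral_mono_set hsub
  -- measure of S
  have hmS : ENNReal.ofReal ((c₂ : ℝ) - 1) * m (ball z₀ s) ≤ m S := by
    have hss : s ≤ 2 ^ k * s := le_mul_of_one_le_left hs0.le (one_le_pow₀ one_le_two)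
    have hdiff : m S = m (ball z₀ (2 ^ k * s)) - m (ball z₀ s) :=
      measure_diff (ball_subset_ball hss) measurableSet_ball.nullMeasurableSet hBfin
    have hbig : (c₂ : ℝ≥0∞) * m (ball z₀ s) ≤ m (ball z₀ (2 ^ k * s)) := by
      refine (hVrev s hs).trans (measure_mono (ball_subset_ball ?_))
      have : (n₀ : ℝ) < 2 ^ k := by exact_mod_cast (Nat.lt_two_pow_self (n := n₀))
      nlinarith
    rw [hdiff]
    apply ENNReal.le_sub_of_add_le_right hBfin
    refine le_trans ?_ hbig
    have hcoe : ENNReal.ofReal ((c₂ : ℝ) - 1) + 1 = (c₂ : ℝ≥0∞) := by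
      rw [← ENNReal.ofReal_one, ← ENNReal.ofReal_add (by linarith) zero_le_one]
      rw [sub_add_cancel, ENNReal.ofReal_coe_nnreal]
    rw [← hcoe, add_mul, one_mul]
  -- putting it together
  refine le_trans ?_ hstep1
  refine le_trans ?_ (mul_le_mul_right hmS L)
  have hD0 : (C_V : ℝ≥0∞) ^ k * m (ball z₀ s) * ENNReal.ofReal (C_Φ ^ k * Φ s) ≠ 0 := by
    apply mul_ne_zero (mul_ne_zero _ hB0)
    · positivity
    · simp only [ne_eq, ENNReal.ofReal_eq_zero, not_le]
      positivity
  have hDfin : (C_V : ℝ≥0∞) ^ k * m (ball z₀ s) * ENNReal.ofReal (C_Φ ^ k * Φ s) ≠ ⊤ := by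
    apply ENNReal.mul_ne_top (ENNReal.mul_ne_top _ hBfin) ENNReal.ofReal_ne_top
    exact ENNReal.pow_ne_top ENNReal.coe_ne_top
  have heq : L * (ENNReal.ofReal ((c₂:ℝ) - 1) * m (ball z₀ s)) =
      ENNReal.ofReal κ * (ENNReal.ofReal ((c₂:ℝ) - 1) * m (ball z₀ s)) /
        ((C_V : ℝ≥0∞) ^ k * m (ball z₀ s) * ENNReal.ofReal (C_Φ ^ k * Φ s)) := by
    rw [hLdef, div_eq_mul_inv, mul_right_comm, ← div_eq_mul_inv]
  rw [heq, ENNReal.le_div_iff_mul_le (Or.inl hD0) (Or.inl hDfin)]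
  -- now a concrete computation in ofReal land
  have hCVcast : (C_V : ℝ≥0∞) ^ k = ENNReal.ofReal ((C_V : ℝ) ^ k) := by
    rw [ENNReal.ofReal_pow (by positivity), ENNReal.ofReal_coe_nnreal]
  calc ENNReal.ofReal (κ * ((c₂:ℝ) - 1) / ((C_V:ℝ) ^ k * C_Φ ^ k) / Φ s) *
        ((C_V : ℝ≥0∞) ^ k * m (ball z₀ s) * ENNReal.ofReal (C_Φ ^ k * Φ s))
      = ENNReal.ofReal (κ * ((c₂:ℝ) - 1) / ((C_V:ℝ) ^ k * C_Φ ^ k) / Φ s *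
          (C_V:ℝ) ^ k * (C_Φ ^ k * Φ s)) * m (ball z₀ s) := by
        have esplit : ENNReal.ofReal (κ * ((c₂:ℝ) - 1) / ((C_V:ℝ) ^ k * C_Φ ^ k) / Φ s *
              (C_V:ℝ) ^ k * (C_Φ ^ k * Φ s)) =
            ENNReal.ofReal (κ * ((c₂:ℝ) - 1) / ((C_V:ℝ) ^ k * C_Φ ^ k) / Φ s) *
              ENNReal.ofReal ((C_V:ℝ) ^ k) * ENNReal.ofReal (C_Φ ^ k * Φ s) := by
          rw [ENNReal.ofReal_mul (by positivity), ENNReal.ofReal_mul (by positivity)]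
        rw [hCVcast, esplit]
        ring
    _ = ENNReal.ofReal (κ * ((c₂:ℝ) - 1)) * m (ball z₀ s) := by
        congr 1
        apply congrArg
        field_simp
    _ = ENNReal.ofReal κ * (ENNReal.ofReal ((c₂ : ℝ) - 1) * m (ball z₀ s)) := by
        rw [← mul_assoc, ENNReal.ofReal_mul hκ.le]
    _ ≤ ENNReal.ofReal κ * (ENNReal.ofReal ((c₂ : ℝ) - 1) * m (ball z₀ s)) := le_rfl
end

section
/- Let (𝔛,d) be a metric space equipped with a Borel measure m, let z₀ ∈ 𝔛, and set V(t) = m(B(z₀,t)), assumed finite and strictly positive for every t > 0. Assume there is C_V > 1 with V(2t) ≤ C_V V(t) for all t > 0. Let Φ : (0,∞) → (0,∞) be nondecreasing with Φ(2t) ≤ C_Φ Φ(t) for all t > 0 for some C_Φ > 1. Assume there exist a natural number n₀ ≥ 2, a constant c₂ > 1 and r₀ > 0 such that V(n₀ t) ≥ c₂ V(t) for all 0 < t ≤ r₀. Let j : 𝔛 → [0,∞] be measurable and suppose there is κ > 0 such that j(y) ≥ κ/(V(s)Φ(s)) for every 0 < s ≤ r₀ and every y ∈ 𝔛 with s/2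 ≤ d(z₀,y) ≤ s. Then there exists a constant c > 0, depending only on C_V, C_Φ, c₂, n₀ and κ, such that for every 0 < r ≤ r₀/(4n₀) one has ∫_{{y : 2r ≤ d(z₀,y) < 2n₀ r}} j dm ≥ c/Φ(r). -/
open MeasureTheory Metric Set
open scoped ENNReal NNReal

/-- Small-scale annulus lower bound for the jump intensity
(key estimate in the proof of Proposition 7.1 of the paper). -/
theorem annulus_integral_lower_bound_small_scale
    {X : Type*} [MetricSpace X] [MeasurableSpace X] [BorelSpace X]
    (m : Measure X) (z₀ : X)
    (hVpos : ∀ t : ℝ, 0 < t → 0 < m (ball z₀ t))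
    (hVfin : ∀ t : ℝ, 0 < t → m (ball z₀ t) < ⊤)
    (C_V : ℝ≥0) (hCV : 1 < C_V)
    (hVdoub : ∀ t : ℝ, 0 < t → m (ball z₀ (2 * t)) ≤ (C_V : ℝ≥0∞) * m (ball z₀ t))
    (Φ : ℝ → ℝ) (hΦpos : ∀ t : ℝ, 0 < t → 0 < Φ t)
    (hΦmono : ∀ s t : ℝ, 0 < s → s ≤ t → Φ s ≤ Φ t)
    (C_Φ : ℝ) (hCΦ : 1 < C_Φ)
    (hΦdoub : ∀ t : ℝ, 0 < t → Φ (2 * t) ≤ C_Φ * Φ t)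
    (n₀ : ℕ) (hn₀ : 2 ≤ n₀) (c₂ : ℝ≥0) (hc₂ : 1 < c₂) (r₀ : ℝ) (hr₀ : 0 < r₀)
    (hVrev : ∀ t : ℝ, 0 < t → t ≤ r₀ → (c₂ : ℝ≥0∞) * m (ball z₀ t) ≤ m (ball z₀ (n₀ * t)))
    (j : X → ℝ≥0∞) (hj : Measurable j) (κ : ℝ) (hκ : 0 < κ)
    (hjlow : ∀ s : ℝ, 0 < s → s ≤ r₀ → ∀ y : X, s / 2 ≤ dist z₀ y → dist z₀ y ≤ s →
      ENNReal.ofReal κ / (m (ball z₀ s) * ENNReal.ofReal (Φ s)) ≤ j y) :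
    ∃ c : ℝ, 0 < c ∧ ∀ r : ℝ, 0 < r → r ≤ r₀ / (4 * n₀) →
      ENNReal.ofReal (c / Φ r) ≤
        ∫⁻ y in {y : X | 2 * r ≤ dist z₀ y ∧ dist z₀ y < 2 * n₀ * r}, j y ∂m := by
  have hCV0 : (0:ℝ) < (C_V:ℝ) := by exact_mod_cast lt_trans zero_lt_one hCV
  have hCΦ0 : (0:ℝ) < C_Φ := lt_trans zero_lt_one hCΦ
  have hc2R : (1:ℝ) < (c₂:ℝ) := by exact_mod_cast hc₂
  have hn₀R : (2:ℝ) ≤ (n₀:ℝ) := by exact_mod_cast hn₀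
  set L : ℕ := n₀ + 1 with hLdef
  refine ⟨κ * ((c₂:ℝ) - 1) / ((C_V:ℝ)^L * C_Φ^(L+1)),
    div_pos (mul_pos hκ (by linarith)) (by positivity), ?_⟩
  -- iterated doubling for V
  have hVk : ∀ k : ℕ, ∀ t : ℝ, 0 < t →
      m (ball z₀ (2^k * t)) ≤ (C_V:ℝ≥0∞)^k * m (ball z₀ t) := by
    intro k
    induction k with
    | zero => intro t ht; simp
    | succ k ih =>
      intro t ht
      have h1 : (2:ℝ)^(k+1) * t = 2 * (2^k * t) := by ring
      rw [h1, pow_succ]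
      calc m (ball z₀ (2*(2^k*t))) ≤ (C_V:ℝ≥0∞) * m (ball z₀ (2^k*t)) :=
            hVdoub _ (by positivity)
        _ ≤ (C_V:ℝ≥0∞) * ((C_V:ℝ≥0∞)^k * m (ball z₀ t)) := by
            exact mul_le_mul_right (ih t ht) _
        _ = (C_V:ℝ≥0∞)^k * (C_V:ℝ≥0∞) * m (ball z₀ t) := by ring
  -- iterated doubling for Φ
  have hΦk : ∀ k : ℕ, ∀ t : ℝ, 0 < t → Φ (2^k * t) ≤ C_Φ^k * Φ t := by
    intro k
    induction k with
    | zero => intro t ht; simp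
    | succ k ih =>
      intro t ht
      have h1 : (2:ℝ)^(k+1) * t = 2 * (2^k * t) := by ring
      rw [h1, pow_succ]
      calc Φ (2*(2^k*t)) ≤ C_Φ * Φ (2^k*t) := hΦdoub _ (by positivity)
        _ ≤ C_Φ * (C_Φ^k * Φ t) := by
            have := ih t ht; nlinarith
        _ = C_Φ^k * C_Φ * Φ t := by ring
  intro r hr hrle
  have hn₀2L : (2:ℝ) * n₀ ≤ 2^L := by
    have h : n₀ < 2 ^ n₀ := Nat.lt_two_pow_self
    have : (n₀:ℝ) < 2^n₀ := by exact_mod_cast h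
    calc (2:ℝ) * n₀ ≤ 2 * 2^n₀ := by linarith
      _ = 2^L := by rw [hLdef, pow_succ]; ring
  have h4n₀r : 4 * (n₀:ℝ) * r ≤ r₀ := by
    have h4n : (0:ℝ) < 4 * n₀ := by linarith
    calc 4 * (n₀:ℝ) * r = (4 * n₀) * r := by ring
      _ ≤ (4 * n₀) * (r₀ / (4 * n₀)) := by
          exact mul_le_mul_of_nonneg_left hrle (le_of_lt h4n)
      _ = r₀ := by field_simp
  have h2r : (0:ℝ) < 2 * r := by linarith
  have h2rle : 2 * r ≤ r₀ := by nlinarith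
  set A : Set X := {y : X | 2 * r ≤ dist z₀ y ∧ dist z₀ y < 2 * n₀ * r} with hAdef
  have hAeq : A = ball z₀ (2 * n₀ * r) \ ball z₀ (2 * r) := by
    ext y
    simp only [hAdef, mem_setOf_eq, Set.mem_diff, mem_ball, dist_comm y z₀, not_lt]
    tauto
  set V2 := m (ball z₀ (2 * r)) with hV2def
  have hV2pos : V2 ≠ 0 := (hVpos _ h2r).ne'
  have hV2fin : V2 ≠ ⊤ := (hVfin _ h2r).ne
  -- measure lower bound for annulus
  have hVS' : (c₂:ℝ≥0∞) * V2 ≤ m (ball z₀ (2 * n₀ * r)) := by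
    have h := hVrev (2*r) h2r h2rle
    have heq : (n₀:ℝ) * (2*r) = 2*n₀*r := by ring
    rwa [heq] at h
  have hmA : ((c₂:ℝ≥0∞) - 1) * V2 ≤ m A := by
    rw [hAeq, measure_diff (ball_subset_ball (by nlinarith))
      measurableSet_ball.nullMeasurableSet hV2fin]
    rw [ENNReal.sub_mul (fun _ _ => hV2fin), one_mul]
    exact tsub_le_tsub hVS' le_rfl
  -- pointwise bound
  set S : ℝ := 4 * n₀ * r with hSdef
  have hSpos : 0 < S := by rw [hSdef]; nlinarith
  set J : ℝ≥0∞ := ENNReal.ofReal κ / (m (ball z₀ S) * ENNReal.ofReal (Φ S)) with hJdef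
  have hpt : ∀ y ∈ A, J ≤ j y := by
    intro y hy
    obtain ⟨hd1, hd2⟩ := hy
    have hdpos : 0 < dist z₀ y := lt_of_lt_of_le h2r hd1
    have hs0 : 0 < 2 * dist z₀ y := by linarith
    have hsle : 2 * dist z₀ y ≤ r₀ := by nlinarith
    have hjy := hjlow (2 * dist z₀ y) hs0 hsle y (by linarith) (by linarith)
    refine le_trans ?_ hjy
    apply ENNReal.div_le_div_left
    have hsS : 2 * dist z₀ y ≤ S := by rw [hSdef]; nlinarith
    exact mul_le_mul' (measure_mono (ball_subset_ball hsS))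
      (ENNReal.ofReal_le_ofReal (hΦmono _ _ hs0 hsS))
  -- bound the denominator of J
  have hVSbound : m (ball z₀ S) ≤ (C_V:ℝ≥0∞)^L * V2 := by
    refine le_trans (measure_mono (ball_subset_ball ?_)) (hVk L (2*r) h2r)
    rw [hSdef]; nlinarith
  have hΦSbound : Φ S ≤ C_Φ^(L+1) * Φ r := by
    refine le_trans (hΦmono _ _ hSpos ?_) (hΦk (L+1) r hr)
    rw [hSdef, pow_succ]
    nlinarith [pow_pos (zero_lt_two (α := ℝ)) L]
  have hΦrpos : 0 < Φ r := hΦpos r hr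
  have hJlow : ENNReal.ofReal κ /
      ((C_V:ℝ≥0∞)^L * V2 * ENNReal.ofReal (C_Φ^(L+1) * Φ r)) ≤ J := by
    apply ENNReal.div_le_div_left
    exact mul_le_mul' hVSbound (ENNReal.ofReal_le_ofReal hΦSbound)
  -- key arithmetic inequality
  have key : ENNReal.ofReal (κ * ((c₂:ℝ) - 1) / ((C_V:ℝ)^L * C_Φ^(L+1)) / Φ r)
      ≤ ((c₂:ℝ≥0∞) - 1) * V2 * J := by
    refine le_trans ?_ (mul_le_mul_right hJlow _)
    set D : ℝ≥0∞ := (C_V:ℝ≥0∞)^L * V2 * ENNReal.ofReal (C_Φ^(L+1) * Φ r) with hDdef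
    have hCVne : (C_V:ℝ≥0∞)^L ≠ 0 :=
      pow_ne_zero _ (ENNReal.coe_ne_zero.mpr (lt_trans zero_lt_one hCV).ne')
    have hCVfin : (C_V:ℝ≥0∞)^L ≠ ⊤ := ENNReal.pow_ne_top ENNReal.coe_ne_top
    have hofpos : ENNReal.ofReal (C_Φ^(L+1) * Φ r) ≠ 0 :=
      (ENNReal.ofReal_pos.mpr (mul_pos (pow_pos hCΦ0 _) hΦrpos)).ne'
    have hD0 : D ≠ 0 := mul_ne_zero (mul_ne_zero hCVne hV2pos) hofpos
    have hDfin : D ≠ ⊤ :=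
      ENNReal.mul_ne_top (ENNReal.mul_ne_top hCVfin hV2fin) ENNReal.ofReal_ne_top
    rw [← mul_div_assoc, ENNReal.le_div_iff_mul_le (Or.inl hD0) (Or.inl hDfin)]
    have hre : ((c₂:ℝ≥0∞) - 1) = ENNReal.ofReal ((c₂:ℝ) - 1) := by
      rw [ENNReal.ofReal_sub _ zero_le_one, ENNReal.ofReal_coe_nnreal, ENNReal.ofReal_one]
    have hCVre : ((C_V:ℝ≥0∞))^L = ENNReal.ofReal ((C_V:ℝ)^L) := by
      rw [ENNReal.ofReal_pow hCV0.le, ENNReal.ofReal_coe_nnreal]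
    have hxnn : 0 ≤ κ * ((c₂:ℝ) - 1) / ((C_V:ℝ)^L * C_Φ^(L+1)) / Φ r := by
      apply div_nonneg _ hΦrpos.le
      apply div_nonneg _ (by positivity)
      nlinarith
    calc ENNReal.ofReal (κ * ((c₂:ℝ) - 1) / ((C_V:ℝ)^L * C_Φ^(L+1)) / Φ r) * D
        = (ENNReal.ofReal (κ * ((c₂:ℝ) - 1) / ((C_V:ℝ)^L * C_Φ^(L+1)) / Φ r)
            * ((C_V:ℝ≥0∞)^L * ENNReal.ofReal (C_Φ^(L+1) * Φ r))) * V2 := by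
          rw [hDdef]; ring
      _ ≤ (((c₂:ℝ≥0∞) - 1) * ENNReal.ofReal κ) * V2 := by
          apply mul_le_mul_left
          rw [hre, hCVre, ← ENNReal.ofReal_mul (by positivity),
            ← ENNReal.ofReal_mul hxnn, ← ENNReal.ofReal_mul (by linarith)]
          apply ENNReal.ofReal_le_ofReal
          rw [show κ * ((c₂:ℝ) - 1) / ((C_V:ℝ)^L * C_Φ^(L+1)) / Φ r
              * ((C_V:ℝ)^L * (C_Φ^(L+1) * Φ r)) = ((c₂:ℝ) - 1) * κ from by
            field_simp]
      _ = ((c₂:ℝ≥0∞) - 1) * V2 * ENNReal.ofReal κ := by ring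
  calc ENNReal.ofReal (κ * ((c₂:ℝ) - 1) / ((C_V:ℝ)^L * C_Φ^(L+1)) / Φ r)
      ≤ ((c₂:ℝ≥0∞) - 1) * V2 * J := key
    _ ≤ m A * J := mul_le_mul_left hmA _
    _ = ∫⁻ _ in A, J ∂m := by rw [setLIntegral_const, mul_comm]
    _ ≤ ∫⁻ y in A, j y ∂m := setLIntegral_mono hj hpt
end

section
/- Let (𝔛,d) be a metric space equipped with a Borel measure m, let z₀ ∈ 𝔛, and set V(t) = m(B(z₀,t)), assumed finite and strictly positive for every t > 0. Assume there is C_V > 1 with V(2t) ≤ C_V V(t) for all t > 0, and that there exist a natural number n₀ ≥ 2, a constant c₂ > 1 and r₀ > 0 such that V(n₀ t) ≥ c₂ V(t) for all t ≥ r₀. Let Φ : (0,∞) → (0,∞) be nondecreasing with Φ(2t) ≤ C_Φ Φ(t) for all t > 0 for some C_Φ > 1. Let j : 𝔛 → [0,∞] be measurable and suppose there is κ > 0 such that j(y) ≥ κ/(V(s)Φ(s)) for every s ≥ r₀ and every y ∈ 𝔛 with s ≤ d(z₀,y) ≤ 2s. Then there exists a constant c > 0, depending only on C_V, C_Φ,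 c₂, n₀ and κ (and in particular independent of r and b), such that for every b ∈ (1,2] and every r ≥ r₀ one has ∫_{{y : d(z₀,y) ≥ br}} j dm ≥ c/Φ(r). -/
open MeasureTheory Metric Set
open scoped ENNReal NNReal

private lemma doub_iter {X : Type*} [MetricSpace X] [MeasurableSpace X]
    (m : Measure X) (z₀ : X) (C_V : ℝ≥0)
    (hVdoub : ∀ t : ℝ, 0 < t → m (ball z₀ (2 * t)) ≤ (C_V : ℝ≥0∞) * m (ball z₀ t)) :
    ∀ K : ℕ, ∀ t : ℝ, 0 < t →
      m (ball z₀ (2 ^ K * t)) ≤ (C_V : ℝ≥0∞) ^ K * m (ball z₀ t) := by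
  intro K
  induction K with
  | zero => intro t ht; simp
  | succ K ih =>
    intro t ht
    have h1 : (2 : ℝ) ^ (K + 1) * t = 2 * (2 ^ K * t) := by ring
    rw [h1]
    calc m (ball z₀ (2 * (2 ^ K * t))) ≤ (C_V : ℝ≥0∞) * m (ball z₀ (2 ^ K * t)) :=
          hVdoub _ (by positivity)
      _ ≤ (C_V : ℝ≥0∞) * ((C_V : ℝ≥0∞) ^ K * m (ball z₀ t)) :=
          mul_le_mul_right (ih t ht) _
      _ = (C_V : ℝ≥0∞) ^ (K + 1) * m (ball z₀ t) := by ring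

private lemma phi_iter (Φ : ℝ → ℝ) (C_Φ : ℝ) (hCΦ : 0 ≤ C_Φ)
    (hΦdoub : ∀ t : ℝ, 0 < t → Φ (2 * t) ≤ C_Φ * Φ t) :
    ∀ K : ℕ, ∀ t : ℝ, 0 < t → Φ (2 ^ K * t) ≤ C_Φ ^ K * Φ t := by
  intro K
  induction K with
  | zero => intro t ht; simp
  | succ K ih =>
    intro t ht
    have h1 : (2 : ℝ) ^ (K + 1) * t = 2 * (2 ^ K * t) := by ring
    rw [h1]
    calc Φ (2 * (2 ^ K * t)) ≤ C_Φ * Φ (2 ^ K * t) := hΦdoub _ (by positivity)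
      _ ≤ C_Φ * (C_Φ ^ K * Φ t) := by
          apply mul_le_mul_of_nonneg_left (ih t ht) hCΦ
      _ = C_Φ ^ (K + 1) * Φ t := by ring

private lemma rev_iter {X : Type*} [MetricSpace X] [MeasurableSpace X]
    (m : Measure X) (z₀ : X) (n₀ : ℕ) (hn₀ : 1 ≤ n₀) (c₂ : ℝ≥0) (r₀ : ℝ) (hr₀ : 0 < r₀)
    (hVrev : ∀ t : ℝ, r₀ ≤ t → (c₂ : ℝ≥0∞) * m (ball z₀ t) ≤ m (ball z₀ (n₀ * t))) :
    ∀ M : ℕ, ∀ t : ℝ, r₀ ≤ t →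
      (c₂ : ℝ≥0∞) ^ M * m (ball z₀ t) ≤ m (ball z₀ ((n₀ : ℝ) ^ M * t)) := by
  intro M
  induction M with
  | zero => intro t ht; simp
  | succ M ih =>
    intro t ht
    have ht' : r₀ ≤ (n₀ : ℝ) ^ M * t := by
      have h1 : (1 : ℝ) ≤ (n₀ : ℝ) ^ M := one_le_pow₀ (by exact_mod_cast hn₀)
      nlinarith [hr₀.le.trans ht]
    calc (c₂ : ℝ≥0∞) ^ (M + 1) * m (ball z₀ t)
        = (c₂ : ℝ≥0∞) * ((c₂ : ℝ≥0∞) ^ M * m (ball z₀ t)) := by ring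
      _ ≤ (c₂ : ℝ≥0∞) * m (ball z₀ ((n₀ : ℝ) ^ M * t)) := mul_le_mul_right (ih t ht) _
      _ ≤ m (ball z₀ ((n₀ : ℝ) * ((n₀ : ℝ) ^ M * t))) := hVrev _ ht'
      _ = m (ball z₀ ((n₀ : ℝ) ^ (M + 1) * t)) := by ring_nf

/-- Display (3.7) in Section 3 of the paper:
`∫_{B̄(z₀,br)ᶜ} j(z₀,z) m(dz) ≥ c₄/Φ(r)` for every `b ∈ (1,2]` and all `r ≥ r₀`,
with the constant independent of `r` and `b`. -/
theorem tail_integral_lower_bound_uniform_in_b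
    {X : Type*} [MetricSpace X] [MeasurableSpace X] [BorelSpace X]
    (m : Measure X) (z₀ : X)
    (hVpos : ∀ t : ℝ, 0 < t → 0 < m (ball z₀ t))
    (hVfin : ∀ t : ℝ, 0 < t → m (ball z₀ t) < ⊤)
    (C_V : ℝ≥0) (hCV : 1 < C_V)
    (hVdoub : ∀ t : ℝ, 0 < t → m (ball z₀ (2 * t)) ≤ (C_V : ℝ≥0∞) * m (ball z₀ t))
    (n₀ : ℕ) (hn₀ : 2 ≤ n₀) (c₂ : ℝ≥0) (hc₂ : 1 < c₂) (r₀ : ℝ) (hr₀ : 0 < r₀)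
    (hVrev : ∀ t : ℝ, r₀ ≤ t → (c₂ : ℝ≥0∞) * m (ball z₀ t) ≤ m (ball z₀ (n₀ * t)))
    (Φ : ℝ → ℝ) (hΦpos : ∀ t : ℝ, 0 < t → 0 < Φ t)
    (hΦmono : ∀ s t : ℝ, 0 < s → s ≤ t → Φ s ≤ Φ t)
    (C_Φ : ℝ) (hCΦ : 1 < C_Φ)
    (hΦdoub : ∀ t : ℝ, 0 < t → Φ (2 * t) ≤ C_Φ * Φ t)
    (j : X → ℝ≥0∞) (hj : Measurable j) (κ : ℝ) (hκ : 0 < κ)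
    (hjlow : ∀ s : ℝ, r₀ ≤ s → ∀ y : X, s ≤ dist z₀ y → dist z₀ y ≤ 2 * s →
      ENNReal.ofReal κ / (m (ball z₀ s) * ENNReal.ofReal (Φ s)) ≤ j y) :
    ∃ c : ℝ, 0 < c ∧ ∀ b : ℝ, 1 < b → b ≤ 2 → ∀ r : ℝ, r₀ ≤ r →
      ENNReal.ofReal (c / Φ r) ≤ ∫⁻ y in {y : X | b * r ≤ dist z₀ y}, j y ∂m := by
  -- choose M with 1 + C_V ≤ 2 * C_V < c₂ ^ M
  obtain ⟨M, hM⟩ : ∃ M : ℕ, 2 * C_V < c₂ ^ M := pow_unbounded_of_one_lt _ hc₂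
  -- choose K with n₀ ^ M < 2 ^ K
  obtain ⟨K, hK⟩ : ∃ K : ℕ, ((n₀ : ℝ)) ^ M < 2 ^ K :=
    pow_unbounded_of_one_lt _ (by norm_num)
  have hCV0 : (0 : ℝ) < (C_V : ℝ) := by exact_mod_cast lt_trans one_pos hCV
  have hCΦ0 : (0 : ℝ) < C_Φ := lt_trans one_pos hCΦ
  refine ⟨κ / ((C_V : ℝ) ^ K * C_Φ ^ (K + 1)), by positivity, ?_⟩
  intro b hb1 hb2 r hr
  have hrpos : 0 < r := lt_of_lt_of_le hr₀ hr
  have h2r : r₀ ≤ 2 * r := by linarith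
  set V2r := m (ball z₀ (2 * r)) with hV2r
  have hV2rpos : 0 < V2r := hVpos _ (by linarith)
  have hV2rfin : V2r < ⊤ := hVfin _ (by linarith)
  set S : Set X := ball z₀ ((n₀ : ℝ) ^ M * (2 * r)) \ closedBall z₀ (2 * r) with hS
  have hSmeas : MeasurableSet S :=
    (measurableSet_ball).diff measurableSet_closedBall
  -- the pointwise lower bound on S
  set D : ℝ≥0∞ := (C_V : ℝ≥0∞) ^ K * ENNReal.ofReal (C_Φ ^ (K + 1) * Φ r) with hD
  have hbound : ∀ y ∈ S, ENNReal.ofReal κ / (D * V2r) ≤ j y := by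
    intro y hy
    obtain ⟨hy1, hy2⟩ := hy
    rw [mem_ball'] at hy1
    rw [mem_closedBall'] at hy2
    push_neg at hy2
    set s : ℝ := max (2 * r) (dist z₀ y / 2) with hs
    have hs2r : 2 * r ≤ s := le_max_left _ _
    have hsr₀ : r₀ ≤ s := le_trans h2r hs2r
    have hsd : s ≤ dist z₀ y := by
      apply max_le hy2.le
      linarith [dist_nonneg (x := z₀) (y := y)]
    have hds : dist z₀ y ≤ 2 * s := by
      rcases le_total (dist z₀ y) (4 * r) with h | h
      · calc dist z₀ y ≤ 4 * r := h
          _ ≤ 2 * s := by linarith [hs2r]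
      · have : dist z₀ y / 2 ≤ s := le_max_right _ _
        linarith
    have hkey := hjlow s hsr₀ y hsd hds
    refine le_trans ?_ hkey
    apply ENNReal.div_le_div_left
    -- m(ball s)*Φ(s) ≤ D * V2r
    have h2K : (1:ℝ) ≤ 2 ^ K := one_le_pow₀ (by norm_num)
    have hsK : s ≤ 2 ^ K * (2 * r) := by
      apply max_le
      · nlinarith
      · nlinarith [dist_nonneg (x := z₀) (y := y)]
    have hVs : m (ball z₀ s) ≤ (C_V : ℝ≥0∞) ^ K * V2r := by
      calc m (ball z₀ s) ≤ m (ball z₀ (2 ^ K * (2 * r))) :=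
            measure_mono (ball_subset_ball hsK)
        _ ≤ (C_V : ℝ≥0∞) ^ K * V2r := doub_iter m z₀ C_V hVdoub K _ (by linarith)
    have hΦs : Φ s ≤ C_Φ ^ (K + 1) * Φ r := by
      have h1 : Φ s ≤ Φ (2 ^ (K + 1) * r) := by
        apply hΦmono _ _ (by linarith) (by rw [pow_succ]; nlinarith)
      calc Φ s ≤ Φ (2 ^ (K + 1) * r) := h1
        _ ≤ C_Φ ^ (K + 1) * Φ r := phi_iter Φ C_Φ hCΦ0.le hΦdoub (K + 1) r hrpos
    calc m (ball z₀ s) * ENNReal.ofReal (Φ s)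
        ≤ ((C_V : ℝ≥0∞) ^ K * V2r) * ENNReal.ofReal (C_Φ ^ (K + 1) * Φ r) :=
          mul_le_mul' hVs (ENNReal.ofReal_le_ofReal hΦs)
      _ = D * V2r := by rw [hD]; ring
  -- measure of S is at least V2r
  have hmS : V2r ≤ m S := by
    have h1 : (c₂ : ℝ≥0∞) ^ M * V2r ≤ m (ball z₀ ((n₀ : ℝ) ^ M * (2 * r))) :=
      rev_iter m z₀ n₀ (by omega) c₂ r₀ hr₀ hVrev M _ h2r
    have h2 : m (closedBall z₀ (2 * r)) ≤ (C_V : ℝ≥0∞) * V2r := by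
      calc m (closedBall z₀ (2 * r)) ≤ m (ball z₀ (2 * (2 * r))) :=
            measure_mono (closedBall_subset_ball (by linarith))
        _ ≤ (C_V : ℝ≥0∞) * V2r := hVdoub _ (by linarith)
    have h3 : V2r + m (closedBall z₀ (2 * r)) ≤ m (ball z₀ ((n₀ : ℝ) ^ M * (2 * r))) := by
      refine le_trans ?_ h1
      calc V2r + m (closedBall z₀ (2 * r)) ≤ V2r + (C_V : ℝ≥0∞) * V2r := add_le_add le_rfl h2
        _ = ((1 : ℝ≥0∞) + C_V) * V2r := by ring
        _ ≤ (c₂ : ℝ≥0∞) ^ M * V2r := by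
            apply mul_le_mul_left
            have : (1 : ℝ≥0) + C_V ≤ c₂ ^ M := by
              calc (1 : ℝ≥0) + C_V ≤ C_V + C_V := add_le_add hCV.le le_rfl
                _ = 2 * C_V := (two_mul _).symm
                _ ≤ c₂ ^ M := hM.le
            calc (1 : ℝ≥0∞) + C_V = ((1 + C_V : ℝ≥0) : ℝ≥0∞) := by push_cast; ring
              _ ≤ ((c₂ ^ M : ℝ≥0) : ℝ≥0∞) := by exact_mod_cast this
              _ = (c₂ : ℝ≥0∞) ^ M := by push_cast; ring
    calc V2r ≤ m (ball z₀ ((n₀ : ℝ) ^ M * (2 * r))) - m (closedBall z₀ (2 * r)) :=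
          ENNReal.le_sub_of_add_le_right (h2.trans_lt (by
            exact ENNReal.mul_lt_top ENNReal.coe_lt_top hV2rfin)).ne h3
      _ ≤ m S := le_measure_diff
  -- put things together
  have hSsub : S ⊆ {y : X | b * r ≤ dist z₀ y} := by
    intro y hy
    obtain ⟨_, hy2⟩ := hy
    rw [mem_closedBall'] at hy2
    push_neg at hy2
    simp only [mem_setOf_eq]
    nlinarith
  have hint : ENNReal.ofReal κ / (D * V2r) * V2r ≤
      ∫⁻ y in {y : X | b * r ≤ dist z₀ y}, j y ∂m := by
    calc ENNReal.ofReal κ / (D * V2r) * V2r ≤ ENNReal.ofReal κ / (D * V2r) * m S :=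
          mul_le_mul_right hmS _
      _ = ∫⁻ _ in S, ENNReal.ofReal κ / (D * V2r) ∂m := by
          rw [setLIntegral_const]
      _ ≤ ∫⁻ y in S, j y ∂m := setLIntegral_mono hj hbound
      _ ≤ ∫⁻ y in {y : X | b * r ≤ dist z₀ y}, j y ∂m := lintegral_mono_set hSsub
  refine le_trans (le_of_eq ?_) hint
  have hΦr : 0 < Φ r := hΦpos r hrpos
  have hDeq : D = ENNReal.ofReal ((C_V : ℝ) ^ K * (C_Φ ^ (K + 1) * Φ r)) := by
    have hpow : ((C_V : ℝ≥0∞)) ^ K = ENNReal.ofReal ((C_V : ℝ) ^ K) := by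
      rw [ENNReal.ofReal_pow (le_of_lt hCV0), ENNReal.ofReal_coe_nnreal]
    rw [hD, hpow, ← ENNReal.ofReal_mul (by positivity)]
  have hcancel : ENNReal.ofReal κ / (D * V2r) * V2r = ENNReal.ofReal κ / D := by
    rw [div_eq_mul_inv, ENNReal.mul_inv (Or.inr hV2rfin.ne) (Or.inr hV2rpos.ne'),
      mul_assoc, mul_assoc, ENNReal.inv_mul_cancel hV2rpos.ne' hV2rfin.ne, mul_one,
      div_eq_mul_inv]
  rw [hcancel, hDeq, ← ENNReal.ofReal_div_of_pos (by positivity)]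
  congr 1
  rw [div_div, mul_assoc]
end
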